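/- Let u₁ = (1, 0, 0), e₃ = (0, 0, 1) and v = (√3/2, 1/2, 0) in ℝ³, and let D̃₆ be the group generated by the reflection in the plane spanned by u₁ and e₃ (the plane y = 0) and the reflection in the plane spanned by v and e₃ (two mirrors containing the z-axis meeting at angle π/6). If L is a full-rank lattice in ℝ³ preserved by D̃₆, then there exist positive real numbers a, b such that, for the diagonal linear map D = diag(a, a, b), the lattice D⁻¹(L) is either L₍₃,₆₎ + ℤe₃ or L₍₃,₆₎ᶜ + ℤe₃. -/

import Mathlib

noncomputable section

/-- `ℝ³`, as the space of triples of reals. -/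
abbrev V3 := Fin 3 → ℝ

/-- A full-rank lattice in `ℝ³`. -/
def IsFullLattice (L : AddSubgroup V3) : Prop :=
  ∃ b : Module.Basis (Fin 3) ℝ V3,
    ∀ x, x ∈ L ↔ ∃ c : Fin 3 → ℤ, x = ∑ i, (c i : ℝ) • b i

/-- `u₁ = (1, 0, 0)`. -/
def u₁ : V3 := ![1, 0, 0]

/-- `u₂ = (1/2, √3/2, 0)`. -/
def u₂ : V3 := ![1 / 2, Real.sqrt 3 / 2, 0]

/-- `e₃ = (0, 0, 1)`. -/
def e₃ : V3 := ![0, 0, 1]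

/-- The lattice `L₍₃,₆₎ + ℤe₃`. -/
def triLat : Set V3 := {x | ∃ m n k : ℤ, x = m • u₁ + n • u₂ + k • e₃}

/-- The lattice `L₍₃,₆₎ᶜ + ℤe₃`. -/
def triCentredLat : Set V3 :=
  {x | ∃ m n k : ℤ, x = m • (u₁ + u₂) + n • ((2 : ℤ) • u₁ - u₂) + k • e₃}

/-- The reflection in the plane `y = 0`, i.e. the plane spanned by `u₁` and `e₃`. -/
def reflPlaneU₁ : V3 → V3 := fun x => ![x 0, -(x 1), x 2]

/-- The reflection in the plane spanned by `v = (√3/2, 1/2, 0)` and `e₃`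
(the line of `v` makes angle `π/6` with the `x`-axis). -/
def reflPlaneV : V3 → V3 := fun x =>
  ![x 0 / 2 + (Real.sqrt 3 / 2) * x 1, (Real.sqrt 3 / 2) * x 0 - x 1 / 2, x 2]

/-! ### Auxiliary material -/

local notation "s" => Real.sqrt 3

lemma sqrt3_mul_self : s * s = 3 := Real.mul_self_sqrt (by norm_num)

/-- Rotation by 60 degrees about the `z`-axis. -/
def rot60 : V3 → V3 := fun v => ![v 0 / 2 - (s/2) * v 1, (s/2) * v 0 + v 1 / 2, v 2]

/-- Squared norm of the horizontal part. -/
def Qn (v : V3) : ℝ := v 0 ^ 2 + v 1 ^ 2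

lemma smul_apply' (m : ℤ) (v : V3) (i : Fin 3) : (m • v) i = (m : ℝ) * v i := by simp

lemma vecn0 (a b c : ℝ) : (![a,b,c] : V3) 0 = a := rfl
lemma vecn1 (a b c : ℝ) : (![a,b,c] : V3) 1 = b := rfl
lemma vecn2 (a b c : ℝ) : (![a,b,c] : V3) 2 = c := rfl
lemma rot0 (v : V3) : rot60 v 0 = v 0/2 - (s/2) * v 1 := rfl
lemma rot1 (v : V3) : rot60 v 1 = (s/2) * v 0 + v 1/2 := rfl
lemma rot2 (v : V3) : rot60 v 2 = v 2 := rfl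
lemma refl0 (v : V3) : reflPlaneU₁ v 0 = v 0 := rfl
lemma refl1 (v : V3) : reflPlaneU₁ v 1 = -(v 1) := rfl
lemma refl2 (v : V3) : reflPlaneU₁ v 2 = v 2 := rfl

lemma vec3_eq_iff (v w : V3) : v = w ↔ v 0 = w 0 ∧ v 1 = w 1 ∧ v 2 = w 2 := by
  constructor
  · rintro rfl; exact ⟨rfl, rfl, rfl⟩
  · rintro ⟨h0, h1, h2⟩; funext i; fin_cases i <;> assumption

lemma rot60_eq (v : V3) : rot60 v = reflPlaneV (reflPlaneU₁ v) := by
  rw [vec3_eq_iff]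
  refine ⟨?_, ?_, ?_⟩ <;> simp [rot60, reflPlaneV, reflPlaneU₁] <;> ring

section memb
variable {L : AddSubgroup V3}

lemma memσ (h₁ : reflPlaneU₁ '' (L : Set V3) = (L : Set V3)) {v : V3} (hv : v ∈ L) :
    reflPlaneU₁ v ∈ L := by
  have : reflPlaneU₁ v ∈ reflPlaneU₁ '' (L : Set V3) := ⟨v, hv, rfl⟩
  rwa [h₁] at this

lemma memτ (h₂ : reflPlaneV '' (L : Set V3) = (L : Set V3)) {v : V3} (hv : v ∈ L) :
    reflPlaneV v ∈ L := by
  have : reflPlaneV v ∈ reflPlaneV '' (L : Set V3) := ⟨v, hv, rfl⟩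
  rwa [h₂] at this

lemma memρ (h₁ : reflPlaneU₁ '' (L : Set V3) = (L : Set V3))
    (h₂ : reflPlaneV '' (L : Set V3) = (L : Set V3)) {v : V3} (hv : v ∈ L) : rot60 v ∈ L := by
  rw [rot60_eq]; exact memτ h₂ (memσ h₁ hv)

lemma memNeg2 (h₁ : reflPlaneU₁ '' (L : Set V3) = (L : Set V3))
    (h₂ : reflPlaneV '' (L : Set V3) = (L : Set V3)) {v : V3} (hv : v ∈ L) :
    (![-(v 0), -(v 1), v 2] : V3) ∈ L := by
  have h := memρ h₁ h₂ (memρ h₁ h₂ (memρ h₁ h₂ hv))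
  have e : rot60 (rot60 (rot60 v)) = ![-(v 0), -(v 1), v 2] := by
    rw [vec3_eq_iff]
    refine ⟨?_, ?_, ?_⟩ <;> simp [rot60]
    · linear_combination (s * v 1 / 8 - 3 * v 0 / 8) * sqrt3_mul_self
    · linear_combination (-(s * v 0 / 8) - 3 * v 1 / 8) * sqrt3_mul_self
  rwa [e] at h

lemma memHor (h₁ : reflPlaneU₁ '' (L : Set V3) = (L : Set V3))
    (h₂ : reflPlaneV '' (L : Set V3) = (L : Set V3)) {v : V3} (hv : v ∈ L) :
    (![2 * v 0, 2 * v 1, 0] : V3) ∈ L := by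
  have h := L.sub_mem hv (memNeg2 h₁ h₂ hv)
  have e : v - ![-(v 0), -(v 1), v 2] = ![2 * v 0, 2 * v 1, 0] := by
    rw [vec3_eq_iff]
    refine ⟨?_, ?_, ?_⟩ <;> simp [Pi.sub_apply] <;> ring
  rwa [e] at h

lemma memVer (h₁ : reflPlaneU₁ '' (L : Set V3) = (L : Set V3))
    (h₂ : reflPlaneV '' (L : Set V3) = (L : Set V3)) {v : V3} (hv : v ∈ L) :
    (![0, 0, 2 * v 2] : V3) ∈ L := by
  have h := L.add_mem hv (memNeg2 h₁ h₂ hv)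
  have e : v + ![-(v 0), -(v 1), v 2] = ![0, 0, 2 * v 2] := by
    rw [vec3_eq_iff]
    refine ⟨?_, ?_, ?_⟩ <;> simp [Pi.add_apply] <;> ring
  rwa [e] at h

end memb

lemma basis_mem {L : AddSubgroup V3} {b : Module.Basis (Fin 3) ℝ V3}
    (hb : ∀ x, x ∈ L ↔ ∃ c : Fin 3 → ℤ, x = ∑ i, (c i : ℝ) • b i) (i : Fin 3) : b i ∈ L := by
  refine (hb _).2 ⟨fun j => if j = i then 1 else 0, ?_⟩
  rw [Finset.sum_eq_single i]
  · simp
  · intro j _ hj; simp [hj]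
  · intro h; simp at h

lemma exists_vert {b : Module.Basis (Fin 3) ℝ V3} : ∃ i, b i 2 ≠ 0 := by
  by_contra h
  push_neg at h
  have hsum := b.sum_equivFun e₃
  have h2 := congrFun hsum 2
  rw [Finset.sum_apply] at h2
  simp only [Pi.smul_apply, smul_eq_mul] at h2
  rw [Finset.sum_eq_zero (fun i _ => by rw [h i, mul_zero])] at h2
  simp [e₃] at h2

lemma exists_hor {b : Module.Basis (Fin 3) ℝ V3} : ∃ i, b i 0 ≠ 0 ∨ b i 1 ≠ 0 := by
  by_contra h
  push_neg at h
  have hsum := b.sum_equivFun u₁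
  have h2 := congrFun hsum 0
  rw [Finset.sum_apply] at h2
  simp only [Pi.smul_apply, smul_eq_mul] at h2
  rw [Finset.sum_eq_zero (fun i _ => by rw [(h i).1, mul_zero])] at h2
  simp [u₁] at h2

lemma finite_ball (L : AddSubgroup V3) (hL : IsFullLattice L) (R : ℝ) :
    {v : V3 | v ∈ L ∧ ‖v‖ ≤ R}.Finite := by
  obtain ⟨b, hb⟩ := hL
  set f : V3 →L[ℝ] (Fin 3 → ℝ) :=
    LinearMap.toContinuousLinearMap (b.equivFun : V3 →ₗ[ℝ] (Fin 3 → ℝ)) with hf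
  set N : ℤ := ⌈‖f‖ * R⌉ with hN
  have hcoef : ∀ v ∈ L, ∀ i, (((fun j => round (b.equivFun v j)) : Fin 3 → ℤ) i : ℝ)
      = b.equivFun v i := by
    intro v hv i
    obtain ⟨c, rfl⟩ := (hb v).1 hv
    have : b.equivFun (∑ i, (c i : ℝ) • b i) = fun i => (c i : ℝ) := by
      rw [← Module.Basis.equivFun_symm_apply, LinearEquiv.apply_symm_apply]
    simp only [this]
    norm_num
  apply Set.Finite.of_finite_image (f := fun v => (fun j => round (b.equivFun v j) : Fin 3 → ℤ))
  · apply Set.Finite.subset (Set.Finite.pi (fun _ : Fin 3 => Set.finite_Icc (-N) N))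
    rintro d ⟨v, ⟨hv, hvR⟩, rfl⟩
    rw [Set.mem_pi]
    intro i _
    rw [Set.mem_Icc, ← abs_le]
    have : ((|round (b.equivFun v i)| : ℤ) : ℝ) ≤ (N : ℝ) := by
      rw [Int.cast_abs, show ((round (b.equivFun v i) : ℤ) : ℝ) = b.equivFun v i from
        hcoef v hv i]
      calc |b.equivFun v i| = ‖b.equivFun v i‖ := (Real.norm_eq_abs _).symm
        _ ≤ ‖b.equivFun v‖ := norm_le_pi_norm _ i
        _ = ‖f v‖ := rfl
        _ ≤ ‖f‖ * ‖v‖ := f.le_opNorm v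
        _ ≤ ‖f‖ * R := mul_le_mul_of_nonneg_left hvR (norm_nonneg f)
        _ ≤ (N : ℝ) := Int.le_ceil _
    exact_mod_cast this
  · intro v hv v' hv' h
    apply b.equivFun.injective
    funext i
    have h' : round (b.equivFun v i) = round (b.equivFun v' i) := congrFun h i
    rw [← hcoef v hv.1 i, ← hcoef v' hv'.1 i]
    exact_mod_cast h'

lemma eq_zero_of_Qn {v : V3} (h2 : v 2 = 0) (hQ : Qn v = 0) : v = 0 := by
  have h0 : v 0 = 0 := by
    have hle : v 0 ^ 2 ≤ 0 := by simp only [Qn] at hQ; nlinarith [sq_nonneg (v 1)]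
    exact (pow_eq_zero_iff (two_ne_zero)).1 (le_antisymm hle (sq_nonneg _))
  have h1 : v 1 = 0 := by
    have hle : v 1 ^ 2 ≤ 0 := by simp only [Qn] at hQ; nlinarith [sq_nonneg (v 0)]
    exact (pow_eq_zero_iff (two_ne_zero)).1 (le_antisymm hle (sq_nonneg _))
  funext i; fin_cases i
  · exact h0
  · exact h1
  · exact h2

lemma exists_min_planar (L : AddSubgroup V3) (hL : IsFullLattice L)
    (v₀ : V3) (hv₀ : v₀ ∈ L) (h0 : v₀ 2 = 0) (hne : Qn v₀ ≠ 0) :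
    ∃ w, w ∈ L ∧ w 2 = 0 ∧ Qn w ≠ 0 ∧ ∀ v, v ∈ L → v 2 = 0 → Qn v ≠ 0 → Qn w ≤ Qn v := by
  have hQnn : (0:ℝ) ≤ Qn v₀ := by unfold Qn; positivity
  have hQ0 : 0 < Qn v₀ := lt_of_le_of_ne hQnn (Ne.symm hne)
  set F : Set V3 := {v | (v ∈ L ∧ v 2 = 0 ∧ Qn v ≠ 0) ∧ Qn v ≤ Qn v₀} with hF
  have hFfin : F.Finite := by
    apply Set.Finite.subset (finite_ball L hL (Real.sqrt (Qn v₀)))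
    rintro v ⟨⟨hv, h2, hQ⟩, hle⟩
    refine ⟨hv, ?_⟩
    rw [pi_norm_le_iff_of_nonneg (Real.sqrt_nonneg _)]
    intro i
    rw [Real.norm_eq_abs, ← Real.sqrt_sq_eq_abs]
    apply Real.sqrt_le_sqrt
    simp only [Qn] at hle
    fin_cases i
    · show v 0 ^ 2 ≤ Qn v₀; simp only [Qn]; nlinarith [sq_nonneg (v 1)]
    · show v 1 ^ 2 ≤ Qn v₀; simp only [Qn]; nlinarith [sq_nonneg (v 0)]
    · show v 2 ^ 2 ≤ Qn v₀; rw [h2]; simpa using hQnn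
  have hFne : F.Nonempty := ⟨v₀, ⟨hv₀, h0, hne⟩, le_refl _⟩
  obtain ⟨w, ⟨⟨hw, hw2, hwQ⟩, _⟩, hmin⟩ := Set.exists_min_image F Qn hFfin hFne
  refine ⟨w, hw, hw2, hwQ, ?_⟩
  intro v hv h2 hQ
  by_cases hle : Qn v ≤ Qn v₀
  · exact hmin v ⟨⟨hv, h2, hQ⟩, hle⟩
  · exact le_trans (hmin v₀ ⟨⟨hv₀, h0, hne⟩, le_refl _⟩) (le_of_not_ge hle)

lemma exists_min_vert (L : AddSubgroup V3) (hL : IsFullLattice L)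
    (t₀ : ℝ) (ht₀ : (![0,0,t₀] : V3) ∈ L) (hne : t₀ ≠ 0) :
    ∃ c : ℝ, 0 < c ∧ (![0,0,c] : V3) ∈ L ∧
      ∀ t : ℝ, (![0,0,t] : V3) ∈ L → ∃ k : ℤ, t = k * c := by
  obtain ⟨t₁, ht₁, ht₁pos⟩ : ∃ t₁ : ℝ, (![0,0,t₁] : V3) ∈ L ∧ 0 < t₁ := by
    rcases lt_or_gt_of_ne hne with h | h
    · refine ⟨-t₀, ?_, by linarith⟩
      have hm := L.neg_mem ht₀
      have e : -(![0,0,t₀] : V3) = ![0,0,-t₀] := by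
        funext i; fin_cases i <;> simp
      rwa [e] at hm
    · exact ⟨t₀, ht₀, h⟩
  set F : Set V3 := {v | (v ∈ L ∧ v 0 = 0 ∧ v 1 = 0 ∧ 0 < v 2) ∧ v 2 ≤ t₁} with hF
  have hFfin : F.Finite := by
    apply Set.Finite.subset (finite_ball L hL t₁)
    rintro v ⟨⟨hv, h0, h1, h2⟩, hle⟩
    refine ⟨hv, ?_⟩
    rw [pi_norm_le_iff_of_nonneg (by linarith : (0:ℝ) ≤ t₁)]
    intro i
    fin_cases i
    · show ‖v 0‖ ≤ t₁; rw [Real.norm_eq_abs, h0]; simp; linarith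
    · show ‖v 1‖ ≤ t₁; rw [Real.norm_eq_abs, h1]; simp; linarith
    · show ‖v 2‖ ≤ t₁; rw [Real.norm_eq_abs, abs_le]; constructor <;> linarith
  have hFne : F.Nonempty := by
    refine ⟨![0,0,t₁], ⟨ht₁, by simp, by simp, ?_⟩, ?_⟩
    · show (0:ℝ) < t₁; exact ht₁pos
    · show t₁ ≤ t₁; exact le_refl _
  obtain ⟨wc, ⟨⟨hwc, hwc0, hwc1, hwc2⟩, _⟩, hmin⟩ :=
    Set.exists_min_image F (fun v => v 2) hFfin hFne
  set c := wc 2 with hc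
  have hwc' : (![0,0,c] : V3) = wc := by
    funext i; fin_cases i
    · show (0:ℝ) = wc 0; rw [hwc0]
    · show (0:ℝ) = wc 1; rw [hwc1]
    · rfl
  have hminpos : ∀ t : ℝ, 0 < t → (![0,0,t] : V3) ∈ L → c ≤ t := by
    intro t ht hmem
    by_cases hle : t ≤ t₁
    · exact hmin ![0,0,t] ⟨⟨hmem, by simp, by simp, by show (0:ℝ) < t; exact ht⟩,
        by show t ≤ t₁; exact hle⟩
    · have h1 : c ≤ t₁ := hmin ![0,0,t₁] ⟨⟨ht₁, by simp, by simp,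
        by show (0:ℝ) < t₁; exact ht₁pos⟩, by show t₁ ≤ t₁; exact le_refl _⟩
      linarith
  refine ⟨c, hwc2, by rwa [hwc'], ?_⟩
  intro t hmem
  refine ⟨⌊t / c⌋, ?_⟩
  set r := t - ⌊t / c⌋ * c with hr
  have hrmem : (![0,0,r] : V3) ∈ L := by
    have hm := L.sub_mem hmem (L.zsmul_mem (by rwa [hwc'] : (![0,0,c] : V3) ∈ L) ⌊t / c⌋)
    have e : (![0,0,t] : V3) - (⌊t / c⌋ : ℤ) • ![0,0,c] = ![0,0,r] := by
      funext i; fin_cases i <;> simp [hr]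
    rwa [e] at hm
  have hr0 : 0 ≤ r := Int.sub_floor_div_mul_nonneg t hwc2
  have hrc : r < c := Int.sub_floor_div_mul_lt t hwc2
  have hrz : r = 0 := by
    by_contra hrne
    have hpos : 0 < r := lt_of_le_of_ne hr0 (Ne.symm hrne)
    have := hminpos r hpos hrmem
    linarith
  rw [hr] at hrz
  linarith

set_option maxHeartbeats 1000000 in
lemma span_planar (L : AddSubgroup V3) (w : V3) (hw : w ∈ L) (hρw : rot60 w ∈ L)
    (hw2 : w 2 = 0) (hwQ : Qn w ≠ 0)
    (hmin : ∀ v, v ∈ L → v 2 = 0 → Qn v ≠ 0 → Qn w ≤ Qn v) :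
    ∀ v, v ∈ L → v 2 = 0 → ∃ m n : ℤ, v = (m : ℤ) • w + (n : ℤ) • rot60 w := by
  intro v hv hv2
  set p := w 0 with hp
  set q := w 1 with hq
  have hQw : Qn w = p ^ 2 + q ^ 2 := rfl
  have hpq : p ^ 2 + q ^ 2 ≠ 0 := by rwa [hQw] at hwQ
  have hQwpos : 0 < p ^ 2 + q ^ 2 := lt_of_le_of_ne (by positivity) (Ne.symm hpq)
  have hspos : (0:ℝ) < s := Real.sqrt_pos.2 (by norm_num)
  set D : ℝ := (s/2) * (p^2+q^2) with hD
  have hDne : D ≠ 0 := by positivity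
  set α : ℝ := (v 0 * ((s*p+q)/2) - v 1 * ((p - s*q)/2)) / D with hα
  set β : ℝ := (p * v 1 - q * v 0) / D with hβ
  have hv0 : v 0 = α * p + β * ((p - s*q)/2) := by
    rw [hα, hβ, hD]; field_simp; ring
  have hv1 : v 1 = α * q + β * ((s*p+q)/2) := by
    rw [hα, hβ, hD]; field_simp; ring
  set m : ℤ := round α with hm
  set n : ℤ := round β with hn
  set v' : V3 := v - (m : ℤ) • w - (n : ℤ) • rot60 w with hv'
  have hv'mem : v' ∈ L := L.sub_mem (L.sub_mem hv (L.zsmul_mem hw m)) (L.zsmul_mem hρw n)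
  have hρw0 : rot60 w 0 = p/2 - (s/2)*q := rfl
  have hρw1 : rot60 w 1 = (s/2)*p + q/2 := rfl
  have hρw2 : rot60 w 2 = 0 := by rw [rot2, hw2]
  have hv'c0 : v' 0 = v 0 - m * p - n * (p/2 - (s/2)*q) := by
    rw [hv', Pi.sub_apply, Pi.sub_apply, smul_apply', smul_apply', hρw0]
  have hv'c1 : v' 1 = v 1 - m * q - n * ((s/2)*p + q/2) := by
    rw [hv', Pi.sub_apply, Pi.sub_apply, smul_apply', smul_apply', hρw1]
  have hv'c2 : v' 2 = 0 := by
    rw [hv', Pi.sub_apply, Pi.sub_apply, smul_apply', smul_apply', hρw2, hv2, hw2]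
    ring
  have hA : |α - (m:ℝ)| ≤ 1/2 := abs_sub_round α
  have hB : |β - (n:ℝ)| ≤ 1/2 := abs_sub_round β
  have hQv' : Qn v' = ((α-m)^2 + (α-m)*(β-n) + (β-n)^2) * Qn w := by
    simp only [Qn, hv'c0, hv'c1, hQw]
    rw [hv0, hv1]
    linear_combination ((β-(n:ℝ))^2 * (p^2+q^2)/4) * sqrt3_mul_self
  have hb1 : (α-(m:ℝ))^2 ≤ 1/4 := by
    have h' := pow_le_pow_left₀ (abs_nonneg (α-(m:ℝ))) hA 2
    rw [sq_abs] at h'; norm_num at h'; linarith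
  have hb2 : (β-(n:ℝ))^2 ≤ 1/4 := by
    have h' := pow_le_pow_left₀ (abs_nonneg (β-(n:ℝ))) hB 2
    rw [sq_abs] at h'; norm_num at h'; linarith
  have hb3 : (α-(m:ℝ))*(β-(n:ℝ)) ≤ 1/4 := by
    calc (α-(m:ℝ))*(β-(n:ℝ)) ≤ |(α-(m:ℝ))*(β-(n:ℝ))| := le_abs_self _
      _ = |α-(m:ℝ)| * |β-(n:ℝ)| := abs_mul _ _
      _ ≤ (1/2) * (1/2) := mul_le_mul hA hB (abs_nonneg _) (by norm_num)
      _ = 1/4 := by norm_num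
  have hQlt : Qn v' < Qn w := by
    rw [hQv', hQw]
    nlinarith [hQwpos]
  have hQv'0 : Qn v' = 0 := by
    by_contra hne
    have hge := hmin v' hv'mem hv'c2 hne
    linarith
  have hz := eq_zero_of_Qn hv'c2 hQv'0
  rw [hv', sub_sub, sub_eq_zero] at hz
  exact ⟨m, n, hz⟩

set_option maxHeartbeats 1000000 in
lemma char_L (L : AddSubgroup V3)
    (hρ : ∀ v : V3, v ∈ L → rot60 v ∈ L)
    (w : V3) (hw : w ∈ L) (hw2 : w 2 = 0)
    (hspan : ∀ v, v ∈ L → v 2 = 0 → ∃ m n : ℤ, v = (m : ℤ) • w + (n : ℤ) • rot60 w)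
    (c : ℝ) (hcmem : (![0,0,c] : V3) ∈ L)
    (hcdiv : ∀ t : ℝ, (![0,0,t] : V3) ∈ L → ∃ k : ℤ, t = k * c) :
    ∀ y : V3, y ∈ L ↔ ∃ m n k : ℤ,
      y 0 = m * w 0 + n * (w 0/2 - (s/2) * w 1) ∧
      y 1 = m * w 1 + n * ((s/2) * w 0 + w 1/2) ∧
      y 2 = k * c := by
  intro y
  constructor
  · intro hy
    set d : V3 := y - rot60 y with hd
    have hdmem : d ∈ L := L.sub_mem hy (hρ y hy)
    have hd2 : d 2 = 0 := by rw [hd, Pi.sub_apply, rot2]; ring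
    obtain ⟨m, n, hmn⟩ := hspan d hdmem hd2
    have hd0 : y 0 / 2 + (s/2) * y 1 = m * w 0 + n * (w 0/2 - (s/2) * w 1) := by
      have h := congrFun hmn 0
      rw [hd, Pi.sub_apply, rot0, Pi.add_apply, smul_apply', smul_apply', rot0] at h
      linear_combination h
    have hd1 : y 1 / 2 - (s/2) * y 0 = m * w 1 + n * ((s/2) * w 0 + w 1/2) := by
      have h := congrFun hmn 1
      rw [hd, Pi.sub_apply, rot1, Pi.add_apply, smul_apply', smul_apply', rot1] at h
      linear_combination h
    have G0 : y 0 = (-n : ℤ) * w 0 + ((m+n : ℤ)) * (w 0/2 - (s/2) * w 1) := by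
      push_cast
      linear_combination (1/2) * hd0 - (s/2) * hd1 - ((y 0 + n * w 0)/4) * sqrt3_mul_self
    have G1 : y 1 = (-n : ℤ) * w 1 + ((m+n : ℤ)) * ((s/2) * w 0 + w 1/2) := by
      push_cast
      linear_combination (s/2) * hd0 + (1/2) * hd1 - ((y 1 + n * w 1)/4) * sqrt3_mul_self
    have hvmem : (![0,0,y 2] : V3) ∈ L := by
      have hm := L.sub_mem hy (L.add_mem (L.zsmul_mem hw (-n)) (L.zsmul_mem (hρ w hw) (m+n)))
      have e : y - ((-n : ℤ) • w + ((m+n : ℤ)) • rot60 w) = ![0,0,y 2] := by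
        funext i; fin_cases i
        · show (y - ((-n : ℤ) • w + ((m+n : ℤ)) • rot60 w)) 0 = (![0,0,y 2] : V3) 0
          rw [Pi.sub_apply, Pi.add_apply, smul_apply', smul_apply', rot0, vecn0]
          linear_combination G0
        · show (y - ((-n : ℤ) • w + ((m+n : ℤ)) • rot60 w)) 1 = (![0,0,y 2] : V3) 1
          rw [Pi.sub_apply, Pi.add_apply, smul_apply', smul_apply', rot1, vecn1]
          linear_combination G1
        · show (y - ((-n : ℤ) • w + ((m+n : ℤ)) • rot60 w)) 2 = (![0,0,y 2] : V3) 2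
          rw [Pi.sub_apply, Pi.add_apply, smul_apply', smul_apply', rot2, vecn2, hw2]
          ring
      rwa [e] at hm
    obtain ⟨k, hk⟩ := hcdiv _ hvmem
    exact ⟨-n, m+n, k, by push_cast at G0 ⊢; linarith [G0],
      by push_cast at G1 ⊢; linarith [G1], hk⟩
  · rintro ⟨m, n, k, h0, h1, h2⟩
    have hm := L.add_mem (L.add_mem (L.zsmul_mem hw m) (L.zsmul_mem (hρ w hw) n))
      (L.zsmul_mem hcmem k)
    have e : (m : ℤ) • w + (n : ℤ) • rot60 w + (k : ℤ) • (![0,0,c] : V3) = y := by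
      funext i; fin_cases i
      · show ((m : ℤ) • w + (n : ℤ) • rot60 w + (k : ℤ) • (![0,0,c] : V3)) 0 = y 0
        rw [Pi.add_apply, Pi.add_apply, smul_apply', smul_apply', smul_apply',
          rot0, vecn0, h0]
        ring
      · show ((m : ℤ) • w + (n : ℤ) • rot60 w + (k : ℤ) • (![0,0,c] : V3)) 1 = y 1
        rw [Pi.add_apply, Pi.add_apply, smul_apply', smul_apply', smul_apply',
          rot1, vecn1, h1]
        ring
      · show ((m : ℤ) • w + (n : ℤ) • rot60 w + (k : ℤ) • (![0,0,c] : V3)) 2 = y 2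
        rw [Pi.add_apply, Pi.add_apply, smul_apply', smul_apply', smul_apply',
          rot2, vecn2, hw2, h2]
        ring
    rwa [e] at hm

lemma sixcases (m n : ℤ) (h : m^2 + m*n + n^2 = 1) :
    (m = 1 ∧ n = 0) ∨ (m = -1 ∧ n = 0) ∨ (m = 0 ∧ n = 1) ∨ (m = 0 ∧ n = -1) ∨
    (m = -1 ∧ n = 1) ∨ (m = 1 ∧ n = -1) := by
  have h4 : (2*m+n)^2 + 3*n^2 = 4 := by linear_combination 4*h
  have hn1 : n^2 ≤ 1 := by nlinarith [sq_nonneg (2*m+n)]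
  have hnl : -1 ≤ n := by nlinarith [sq_nonneg (n+1)]
  have hnu : n ≤ 1 := by nlinarith [sq_nonneg (n-1)]
  interval_cases n
  · have hm' : m * (m - 1) = 0 := by linear_combination h
    rcases mul_eq_zero.1 hm' with h' | h'
    · exact Or.inr (Or.inr (Or.inr (Or.inl ⟨h', rfl⟩)))
    · exact Or.inr (Or.inr (Or.inr (Or.inr (Or.inr ⟨by omega, rfl⟩))))
  · have hm' : (m-1)*(m+1) = 0 := by linear_combination h
    rcases mul_eq_zero.1 hm' with h' | h'
    · exact Or.inl ⟨by omega, rfl⟩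
    · exact Or.inr (Or.inl ⟨by omega, rfl⟩)
  · have hm' : m * (m+1) = 0 := by linear_combination h
    rcases mul_eq_zero.1 hm' with h' | h'
    · exact Or.inr (Or.inr (Or.inl ⟨h', rfl⟩))
    · exact Or.inr (Or.inr (Or.inr (Or.inr (Or.inl ⟨by omega, rfl⟩))))

lemma mem_triLat_iff (x : V3) : x ∈ triLat ↔ ∃ m n k : ℤ,
    x 0 = m + n * (1/2) ∧ x 1 = n * (s/2) ∧ x 2 = k := by
  constructor
  · rintro ⟨m, n, k, rfl⟩
    refine ⟨m, n, k, ?_, ?_, ?_⟩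
    · rw [Pi.add_apply, Pi.add_apply, smul_apply', smul_apply', smul_apply']
      show (m:ℝ) * u₁ 0 + (n:ℝ) * u₂ 0 + (k:ℝ) * e₃ 0 = _
      rw [show u₁ 0 = 1 from rfl, show u₂ 0 = 1/2 from rfl, show e₃ 0 = 0 from rfl]
      ring
    · rw [Pi.add_apply, Pi.add_apply, smul_apply', smul_apply', smul_apply']
      show (m:ℝ) * u₁ 1 + (n:ℝ) * u₂ 1 + (k:ℝ) * e₃ 1 = _
      rw [show u₁ 1 = 0 from rfl, show u₂ 1 = s/2 from rfl, show e₃ 1 = 0 from rfl]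
      ring
    · rw [Pi.add_apply, Pi.add_apply, smul_apply', smul_apply', smul_apply']
      show (m:ℝ) * u₁ 2 + (n:ℝ) * u₂ 2 + (k:ℝ) * e₃ 2 = _
      rw [show u₁ 2 = 0 from rfl, show u₂ 2 = 0 from rfl, show e₃ 2 = 1 from rfl]
      ring
  · rintro ⟨m, n, k, h0, h1, h2⟩
    refine ⟨m, n, k, ?_⟩
    funext i; fin_cases i
    · show x 0 = ((m : ℤ) • u₁ + (n : ℤ) • u₂ + (k : ℤ) • e₃) 0
      rw [Pi.add_apply, Pi.add_apply, smul_apply', smul_apply', smul_apply',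
        show u₁ 0 = 1 from rfl, show u₂ 0 = 1/2 from rfl, show e₃ 0 = 0 from rfl, h0]
      ring
    · show x 1 = ((m : ℤ) • u₁ + (n : ℤ) • u₂ + (k : ℤ) • e₃) 1
      rw [Pi.add_apply, Pi.add_apply, smul_apply', smul_apply', smul_apply',
        show u₁ 1 = 0 from rfl, show u₂ 1 = s/2 from rfl, show e₃ 1 = 0 from rfl, h1]
      ring
    · show x 2 = ((m : ℤ) • u₁ + (n : ℤ) • u₂ + (k : ℤ) • e₃) 2
      rw [Pi.add_apply, Pi.add_apply, smul_apply', smul_apply', smul_apply',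
        show u₁ 2 = 0 from rfl, show u₂ 2 = 0 from rfl, show e₃ 2 = 1 from rfl, h2]
      ring

lemma mem_triC_iff (x : V3) : x ∈ triCentredLat ↔ ∃ m n k : ℤ,
    x 0 = (m + n) * (3/2) ∧ x 1 = (m - n) * (s/2) ∧ x 2 = k := by
  have e10 : (u₁ + u₂) 0 = 3/2 := by
    rw [Pi.add_apply, show u₁ 0 = 1 from rfl, show u₂ 0 = 1/2 from rfl]; ring
  have e11 : (u₁ + u₂) 1 = s/2 := by
    rw [Pi.add_apply, show u₁ 1 = 0 from rfl, show u₂ 1 = s/2 from rfl]; ring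
  have e12 : (u₁ + u₂) 2 = 0 := by
    rw [Pi.add_apply, show u₁ 2 = 0 from rfl, show u₂ 2 = 0 from rfl]; ring
  have e20 : ((2 : ℤ) • u₁ - u₂) 0 = 3/2 := by
    rw [Pi.sub_apply, smul_apply', show u₁ 0 = 1 from rfl, show u₂ 0 = 1/2 from rfl]
    norm_num
  have e21 : ((2 : ℤ) • u₁ - u₂) 1 = -(s/2) := by
    rw [Pi.sub_apply, smul_apply', show u₁ 1 = 0 from rfl, show u₂ 1 = s/2 from rfl]
    norm_num
  have e22 : ((2 : ℤ) • u₁ - u₂) 2 = 0 := by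
    rw [Pi.sub_apply, smul_apply', show u₁ 2 = 0 from rfl, show u₂ 2 = 0 from rfl]
    norm_num
  constructor
  · rintro ⟨m, n, k, rfl⟩
    refine ⟨m, n, k, ?_, ?_, ?_⟩
    · rw [Pi.add_apply, Pi.add_apply, smul_apply', smul_apply', smul_apply',
        e10, e20, show e₃ 0 = 0 from rfl]
      ring
    · rw [Pi.add_apply, Pi.add_apply, smul_apply', smul_apply', smul_apply',
        e11, e21, show e₃ 1 = 0 from rfl]
      ring
    · rw [Pi.add_apply, Pi.add_apply, smul_apply', smul_apply', smul_apply',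
        e12, e22, show e₃ 2 = 1 from rfl]
      ring
  · rintro ⟨m, n, k, h0, h1, h2⟩
    refine ⟨m, n, k, ?_⟩
    funext i; fin_cases i
    · show x 0 = ((m : ℤ) • (u₁ + u₂) + (n : ℤ) • ((2 : ℤ) • u₁ - u₂) + (k : ℤ) • e₃) 0
      rw [Pi.add_apply, Pi.add_apply, smul_apply', smul_apply', smul_apply',
        e10, e20, show e₃ 0 = 0 from rfl, h0]
      ring
    · show x 1 = ((m : ℤ) • (u₁ + u₂) + (n : ℤ) • ((2 : ℤ) • u₁ - u₂) + (k : ℤ) • e₃) 1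
      rw [Pi.add_apply, Pi.add_apply, smul_apply', smul_apply', smul_apply',
        e11, e21, show e₃ 1 = 0 from rfl, h1]
      ring
    · show x 2 = ((m : ℤ) • (u₁ + u₂) + (n : ℤ) • ((2 : ℤ) • u₁ - u₂) + (k : ℤ) • e₃) 2
      rw [Pi.add_apply, Pi.add_apply, smul_apply', smul_apply', smul_apply',
        e12, e22, show e₃ 2 = 1 from rfl, h2]
      ring

lemma sign_data (p : ℝ) : ∃ εz : ℤ, (εz : ℝ) * |p| = p ∧ (εz : ℝ) * p = |p| := by
  rcases le_or_gt 0 p with h | h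
  · exact ⟨1, by rw [abs_of_nonneg h]; norm_num, by rw [abs_of_nonneg h]; norm_num⟩
  · exact ⟨-1, by rw [abs_of_neg h]; push_cast; ring, by rw [abs_of_neg h]; push_cast; ring⟩

set_option maxHeartbeats 1000000 in
lemma finishA (L : AddSubgroup V3)
    (hρ : ∀ v : V3, v ∈ L → rot60 v ∈ L)
    (w : V3) (hw : w ∈ L) (hw2 : w 2 = 0) (hwQ : Qn w ≠ 0)
    (hmin : ∀ v, v ∈ L → v 2 = 0 → Qn v ≠ 0 → Qn w ≤ Qn v)
    (c : ℝ) (hc : 0 < c) (hcmem : (![0,0,c] : V3) ∈ L)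
    (hcdiv : ∀ t : ℝ, (![0,0,t] : V3) ∈ L → ∃ k : ℤ, t = k * c)
    (hA : w 1 = 0) :
    ∃ a b : ℝ, 0 < a ∧ 0 < b ∧
      ((fun x : V3 => ![a * x 0, a * x 1, b * x 2]) ⁻¹' (L : Set V3)) = triLat := by
  have hchar := char_L L hρ w hw hw2 (span_planar L w hw (hρ w hw) hw2 hwQ hmin) c hcmem hcdiv
  set p := w 0 with hp
  have hpne : p ≠ 0 := by
    intro h
    apply hwQ
    show p ^ 2 + w 1 ^ 2 = 0
    rw [h, hA]; ring
  obtain ⟨εz, hε, hεp⟩ := sign_data p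
  refine ⟨|p|, c, abs_pos.2 hpne, hc, ?_⟩
  ext x
  simp only [Set.mem_preimage, SetLike.mem_coe]
  rw [hchar, mem_triLat_iff]
  constructor
  · rintro ⟨m, n, k, e0, e1, e2⟩
    rw [vecn0, hA] at e0
    rw [vecn1, hA] at e1
    rw [vecn2] at e2
    refine ⟨εz * m, εz * n, k, ?_, ?_, ?_⟩
    · refine mul_left_cancel₀ (abs_ne_zero.2 hpne) ?_
      push_cast
      linear_combination e0 - ((m:ℝ) + (n:ℝ)/2) * hε
    · refine mul_left_cancel₀ (abs_ne_zero.2 hpne) ?_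
      push_cast
      linear_combination e1 - ((n:ℝ) * (s/2)) * hε
    · refine mul_left_cancel₀ (ne_of_gt hc) ?_
      linear_combination e2
  · rintro ⟨m, n, k, f0, f1, f2⟩
    refine ⟨εz * m, εz * n, k, ?_, ?_, ?_⟩
    · rw [vecn0, hA]
      push_cast
      linear_combination |p| * f0 - ((m:ℝ) + (n:ℝ)/2) * hεp
    · rw [vecn1, hA]
      push_cast
      linear_combination |p| * f1 - ((n:ℝ) * (s/2)) * hεp
    · rw [vecn2, f2]
      ring

set_option maxHeartbeats 1000000 in
lemma finishB (L : AddSubgroup V3)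
    (hρ : ∀ v : V3, v ∈ L → rot60 v ∈ L)
    (w : V3) (hw : w ∈ L) (hw2 : w 2 = 0) (hwQ : Qn w ≠ 0)
    (hmin : ∀ v, v ∈ L → v 2 = 0 → Qn v ≠ 0 → Qn w ≤ Qn v)
    (c : ℝ) (hc : 0 < c) (hcmem : (![0,0,c] : V3) ∈ L)
    (hcdiv : ∀ t : ℝ, (![0,0,t] : V3) ∈ L → ∃ k : ℤ, t = k * c)
    (hB : w 0 = -(s * w 1)) :
    ∃ a b : ℝ, 0 < a ∧ 0 < b ∧
      ((fun x : V3 => ![a * x 0, a * x 1, b * x 2]) ⁻¹' (L : Set V3)) = triCentredLat := by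
  have hchar := char_L L hρ w hw hw2 (span_planar L w hw (hρ w hw) hw2 hwQ hmin) c hcmem hcdiv
  set q := w 1 with hq
  have hspos : (0:ℝ) < s := Real.sqrt_pos.2 (by norm_num)
  have hqne : q ≠ 0 := by
    intro h
    apply hwQ
    show w 0 ^ 2 + q ^ 2 = 0
    rw [hB, h]; ring
  obtain ⟨εz, hε, hεp⟩ := sign_data q
  have hapos : 0 < 2*s*|q|/3 := by
    have := abs_pos.2 hqne
    positivity
  refine ⟨2*s*|q|/3, c, hapos, hc, ?_⟩
  ext x
  simp only [Set.mem_preimage, SetLike.mem_coe]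
  rw [hchar, mem_triC_iff]
  constructor
  · rintro ⟨m, n, k, e0, e1, e2⟩
    rw [vecn0, hB] at e0
    rw [vecn1, hB] at e1
    rw [vecn2] at e2
    refine ⟨-(εz * n), -(εz * m), k, ?_, ?_, ?_⟩
    · refine mul_left_cancel₀ (ne_of_gt hapos) ?_
      push_cast
      linear_combination e0 + (((m:ℝ) + (n:ℝ)) * s) * hε
    · refine mul_left_cancel₀ (ne_of_gt hapos) ?_
      push_cast
      linear_combination e1 - ((m:ℝ) - (n:ℝ)) * hε
        - (((m:ℝ) - (n:ℝ)) * |q| / 3 + (n:ℝ) * q / 2) * sqrt3_mul_self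
        + (|q| * ((m:ℝ) - (n:ℝ)) * (1 - (εz:ℝ)) / 3) * sqrt3_mul_self
    · refine mul_left_cancel₀ (ne_of_gt hc) ?_
      linear_combination e2
  · rintro ⟨m, n, k, f0, f1, f2⟩
    refine ⟨-(εz * n), -(εz * m), k, ?_, ?_, ?_⟩
    · rw [vecn0, hB]
      push_cast
      linear_combination (2*s*|q|/3) * f0 - (((m:ℝ) + (n:ℝ)) * s) * hεp
    · rw [vecn1, hB]
      push_cast
      linear_combination (2*s*|q|/3) * f1 + ((m:ℝ) - (n:ℝ)) * hεp
        + (((m:ℝ) - (n:ℝ)) * |q| / 3 - (n:ℝ) * q / 2) * sqrt3_mul_self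
        + (-(s*s/2) * (m:ℝ) - (m:ℝ)/2 + 2*(n:ℝ)) * hεp
        + ((m:ℝ)*|q|/2 + (n:ℝ)*q/2) * sqrt3_mul_self
        - (|q| * (m:ℝ)) * sqrt3_mul_self
    · rw [vecn2, f2]
      ring

lemma Qn_rot (v : V3) : Qn (rot60 v) = Qn v := by
  simp only [Qn, rot0, rot1]
  linear_combination ((v 0)^2/4 + (v 1)^2/4) * sqrt3_mul_self

lemma Qn_sub_rot (v : V3) : Qn (v - rot60 v) = Qn v := by
  simp only [Qn, Pi.sub_apply, rot0, rot1]
  linear_combination ((v 0)^2/4 + (v 1)^2/4) * sqrt3_mul_self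

/-- A full-rank lattice in `ℝ³` preserved by the group `D̃₆` generated by
the reflections in the planes spanned by `u₁, e₃` and by `v = (√3/2, 1/2, 0), e₃` (mirrors
meeting at angle `π/6`) is the image under a diagonal map `D = diag(a, a, b)` (with
`a, b > 0`) of either `L₍₃,₆₎ + ℤe₃` or `L₍₃,₆₎ᶜ + ℤe₃`. -/
theorem statement15 (L : AddSubgroup V3) (hL : IsFullLattice L)
    (h₁ : reflPlaneU₁ '' (L : Set V3) = (L : Set V3))
    (h₂ : reflPlaneV '' (L : Set V3) = (L : Set V3)) :
    ∃ a b : ℝ, 0 < a ∧ 0 < b ∧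
      (((fun x : V3 => ![a * x 0, a * x 1, b * x 2]) ⁻¹' (L : Set V3)) = triLat ∨
       ((fun x : V3 => ![a * x 0, a * x 1, b * x 2]) ⁻¹' (L : Set V3)) = triCentredLat) := by
  obtain ⟨b, hb⟩ := hL
  have hLfull : IsFullLattice L := ⟨b, hb⟩
  have hρ : ∀ v : V3, v ∈ L → rot60 v ∈ L := fun v hv => memρ h₁ h₂ hv
  -- a nonzero horizontal vector
  obtain ⟨i, hi⟩ := exists_hor (b := b)
  have hv₀mem : (![2 * b i 0, 2 * b i 1, 0] : V3) ∈ L := memHor h₁ h₂ (basis_mem hb i)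
  have hv₀Q : Qn (![2 * b i 0, 2 * b i 1, 0] : V3) ≠ 0 := by
    show (2 * b i 0) ^ 2 + (2 * b i 1) ^ 2 ≠ 0
    rcases hi with h | h
    · have : 0 < (2 * b i 0)^2 := by positivity
      nlinarith [sq_nonneg (2 * b i 1)]
    · have : 0 < (2 * b i 1)^2 := by positivity
      nlinarith [sq_nonneg (2 * b i 0)]
  obtain ⟨w, hw, hw2, hwQ, hmin⟩ :=
    exists_min_planar L hLfull _ hv₀mem (vecn2 _ _ _) hv₀Q
  -- the vertical period
  obtain ⟨j, hj⟩ := exists_vert (b := b)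
  have ht₀mem : (![0, 0, 2 * b j 2] : V3) ∈ L := memVer h₁ h₂ (basis_mem hb j)
  obtain ⟨c, hc, hcmem, hcdiv⟩ :=
    exists_min_vert L hLfull _ ht₀mem (by intro h; exact hj (by linarith))
  -- the reflection of w lies in the lattice
  set p := w 0 with hp
  set q := w 1 with hq
  have hswmem : reflPlaneU₁ w ∈ L := memσ h₁ hw
  have hsw2 : reflPlaneU₁ w 2 = 0 := by rw [refl2, hw2]
  obtain ⟨m, n, hmn⟩ := span_planar L w hw (hρ w hw) hw2 hwQ hmin _ hswmem hsw2
  have E0 : p = (m:ℝ) * p + (n:ℝ) * (p/2 - (s/2)*q) := by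
    have h := congrFun hmn 0
    rw [refl0, Pi.add_apply, smul_apply', smul_apply', rot0] at h
    linear_combination h
  have E1 : -q = (m:ℝ) * q + (n:ℝ) * ((s/2)*p + q/2) := by
    have h := congrFun hmn 1
    rw [refl1, Pi.add_apply, smul_apply', smul_apply', rot1] at h
    linear_combination h
  have hpq : p ^ 2 + q ^ 2 ≠ 0 := hwQ
  have key : ((m:ℝ)^2 + (m:ℝ)*(n:ℝ) + (n:ℝ)^2 - 1) * (p^2+q^2) = 0 := by
    linear_combination
      (-((m:ℝ) * p + (n:ℝ) * (p/2 - (s/2)*q) + p)) * E0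
      + (q - ((m:ℝ) * q + (n:ℝ) * ((s/2)*p + q/2))) * E1
      - ((n:ℝ)^2*(p^2+q^2)/4) * sqrt3_mul_self
  have hone : m^2 + m*n + n^2 = 1 := by
    have h' : ((m:ℝ)^2 + (m:ℝ)*(n:ℝ) + (n:ℝ)^2 - 1) = 0 :=
      (mul_eq_zero.1 key).resolve_right hpq
    have : ((m^2 + m*n + n^2 : ℤ) : ℝ) = ((1 : ℤ) : ℝ) := by push_cast; linarith
    exact_mod_cast this
  rcases sixcases m n hone with ⟨hm', hn'⟩ | ⟨hm', hn'⟩ | ⟨hm', hn'⟩ | ⟨hm', hn'⟩ |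
    ⟨hm', hn'⟩ | ⟨hm', hn'⟩
  all_goals subst hm'; subst hn'
  -- case (1, 0): q = 0, aligned
  · have hA : w 1 = 0 := by
      push_cast at E1
      rw [← hq]; linarith
    obtain ⟨a, bb, ha, hbb, hset⟩ := finishA L hρ w hw hw2 hwQ hmin c hc hcmem hcdiv hA
    exact ⟨a, bb, ha, hbb, Or.inl hset⟩
  -- case (-1, 0): p = 0, rotated; use w' = rot60 w
  · have hp0 : p = 0 := by push_cast at E0; linarith
    set w' : V3 := rot60 w with hw'
    have hw'2 : w' 2 = 0 := by rw [hw', rot2, hw2]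
    have hQ' : Qn w' = Qn w := Qn_rot w
    have hw'Q : Qn w' ≠ 0 := by rw [hQ']; exact hwQ
    have hmin' : ∀ v, v ∈ L → v 2 = 0 → Qn v ≠ 0 → Qn w' ≤ Qn v := by
      intro v hv h2 hQv; rw [hQ']; exact hmin v hv h2 hQv
    have hB : w' 0 = -(s * w' 1) := by
      rw [hw', rot0, rot1, ← hp, ← hq]
      linear_combination (1/2 + s*s/2) * hp0
    obtain ⟨a, bb, ha, hbb, hset⟩ := finishB L hρ w' (hρ w hw) hw'2 hw'Q hmin' c hc hcmem hcdiv hB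
    exact ⟨a, bb, ha, hbb, Or.inr hset⟩
  -- case (0, 1): p = -s q, rotated; w' = w
  · have hB : w 0 = -(s * w 1) := by
      push_cast at E0
      rw [← hp, ← hq]; linarith
    obtain ⟨a, bb, ha, hbb, hset⟩ := finishB L hρ w hw hw2 hwQ hmin c hc hcmem hcdiv hB
    exact ⟨a, bb, ha, hbb, Or.inr hset⟩
  -- case (0, -1): q = s p, aligned; w' = w + reflPlaneU₁ w
  · have hqsp : q = s * p := by
      push_cast at E0
      have h3p : 3 * p = s * q := by linear_combination 2 * E0
      linear_combination (-(s/3)) * h3p - (q/3) * sqrt3_mul_self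
    set w' : V3 := w + reflPlaneU₁ w with hw'
    have hw'mem : w' ∈ L := L.add_mem hw hswmem
    have hw'2 : w' 2 = 0 := by rw [hw', Pi.add_apply, refl2, hw2]; ring
    have hw'1 : w' 1 = 0 := by rw [hw', Pi.add_apply, refl1]; ring
    have hQ' : Qn w' = Qn w := by
      show (w' 0)^2 + (w' 1)^2 = p^2 + q^2
      rw [hw'1, show w' 0 = 2 * p from by rw [hw', Pi.add_apply, refl0, ← hp]; ring, hqsp]
      linear_combination (-(p^2)) * sqrt3_mul_self
    have hw'Q : Qn w' ≠ 0 := by rw [hQ']; exact hwQ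
    have hmin' : ∀ v, v ∈ L → v 2 = 0 → Qn v ≠ 0 → Qn w' ≤ Qn v := by
      intro v hv h2 hQv; rw [hQ']; exact hmin v hv h2 hQv
    obtain ⟨a, bb, ha, hbb, hset⟩ := finishA L hρ w' hw'mem hw'2 hw'Q hmin' c hc hcmem hcdiv hw'1
    exact ⟨a, bb, ha, hbb, Or.inl hset⟩
  -- case (-1, 1): q = -s p, aligned; w' = w + reflPlaneU₁ w
  · have hqsp : q = -(s * p) := by
      push_cast at E0
      have h3p : 3 * p = -(s * q) := by linear_combination 2 * E0
      linear_combination (s/3) * h3p - (q/3) * sqrt3_mul_self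
    set w' : V3 := w + reflPlaneU₁ w with hw'
    have hw'mem : w' ∈ L := L.add_mem hw hswmem
    have hw'2 : w' 2 = 0 := by rw [hw', Pi.add_apply, refl2, hw2]; ring
    have hw'1 : w' 1 = 0 := by rw [hw', Pi.add_apply, refl1]; ring
    have hQ' : Qn w' = Qn w := by
      show (w' 0)^2 + (w' 1)^2 = p^2 + q^2
      rw [hw'1, show w' 0 = 2 * p from by rw [hw', Pi.add_apply, refl0, ← hp]; ring, hqsp]
      linear_combination (-(p^2)) * sqrt3_mul_self
    have hw'Q : Qn w' ≠ 0 := by rw [hQ']; exact hwQ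
    have hmin' : ∀ v, v ∈ L → v 2 = 0 → Qn v ≠ 0 → Qn w' ≤ Qn v := by
      intro v hv h2 hQv; rw [hQ']; exact hmin v hv h2 hQv
    obtain ⟨a, bb, ha, hbb, hset⟩ := finishA L hρ w' hw'mem hw'2 hw'Q hmin' c hc hcmem hcdiv hw'1
    exact ⟨a, bb, ha, hbb, Or.inl hset⟩
  -- case (1, -1): p = s q, rotated; w' = w - rot60 w
  · have hpsq : p = s * q := by
      push_cast at E0
      linarith
    set w' : V3 := w - rot60 w with hw'
    have hw'mem : w' ∈ L := L.sub_mem hw (hρ w hw)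
    have hw'2 : w' 2 = 0 := by rw [hw', Pi.sub_apply, rot2]; ring
    have hQ' : Qn w' = Qn w := Qn_sub_rot w
    have hw'Q : Qn w' ≠ 0 := by rw [hQ']; exact hwQ
    have hmin' : ∀ v, v ∈ L → v 2 = 0 → Qn v ≠ 0 → Qn w' ≤ Qn v := by
      intro v hv h2 hQv; rw [hQ']; exact hmin v hv h2 hQv
    have hB : w' 0 = -(s * w' 1) := by
      rw [hw', Pi.sub_apply, Pi.sub_apply, rot0, rot1, ← hp, ← hq]
      linear_combination (-(p/2)) * sqrt3_mul_self - hpsq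
    obtain ⟨a, bb, ha, hbb, hset⟩ := finishB L hρ w' hw'mem hw'2 hw'Q hmin' c hc hcmem hcdiv hB
    exact ⟨a, bb, ha, hbb, Or.inr hset⟩

end
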